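/- Let ℓ and q be distinct primes and let r, n be positive integers. The group GL_n(𝔽_ℓ) contains an element of order q^r if and only if the multiplicative order of ℓ modulo q^r is at most n. -/

import Mathlib

set_option maxHeartbeats 1000000

open Matrix Polynomial

-- embed GL_d into GL_n preserving order
lemma aux_embed {F : Type*} [Field F] {d n : ℕ} (hdn : d ≤ n)
    (A : (Matrix (Fin d) (Fin d) F)ˣ) :
    ∃ B : GL (Fin n) F, orderOf B = orderOf A := by
  let emb : Matrix (Fin d) (Fin d) F →* Matrix (Fin d ⊕ Fin (n - d)) (Fin d ⊕ Fin (n - d)) F :=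
    { toFun := fun X => Matrix.fromBlocks X 0 0 1
      map_one' := Matrix.fromBlocks_one
      map_mul' := fun X Y => by
        rw [Matrix.fromBlocks_multiply]; simp }
  have hinj : Function.Injective emb := fun X Y h => by
    have := congrArg Matrix.toBlocks₁₁ h
    simpa [emb, Matrix.toBlocks_fromBlocks₁₁] using this
  have h1 : d + (n - d) = n := Nat.add_sub_cancel' hdn
  let e : Fin d ⊕ Fin (n - d) ≃ Fin n := finSumFinEquiv.trans (finCongr h1)
  let re := Units.mapEquiv ((Matrix.reindexAlgEquiv F F e).toRingEquiv.toMulEquiv)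
  refine ⟨re (Units.map emb A), ?_⟩
  have := orderOf_injective re.toMonoidHom re.injective ((Units.map emb) A)
  rw [show (re ((Units.map emb) A)) = re.toMonoidHom ((Units.map emb) A) from rfl, this,
    orderOf_injective (Units.map emb) (Units.map_injective hinj)]
open Matrix Polynomial

lemma aux_back (ℓ q : ℕ) [Fact (Nat.Prime ℓ)] (hq : q.Prime) (hne : ℓ ≠ q)
    (r n : ℕ) (hr : 0 < r) (hle : orderOf (ℓ : ZMod (q ^ r)) ≤ n) :
    ∃ A : (Matrix (Fin (orderOf (ℓ : ZMod (q ^ r)))) (Fin (orderOf (ℓ : ZMod (q ^ r)))) (ZMod ℓ))ˣ,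
      orderOf A = q ^ r := by
  have hℓp : Nat.Prime ℓ := Fact.out
  set d := orderOf (ℓ : ZMod (q ^ r)) with hd_def
  haveI : NeZero (q ^ r) := ⟨pow_ne_zero r hq.ne_zero⟩
  have hcop : Nat.Coprime ℓ (q ^ r) :=
    (Nat.coprime_primes hℓp hq).mpr hne |>.pow_right r
  have hd : 0 < d := by
    have := orderOf_pos (ZMod.unitOfCoprime ℓ hcop)
    rwa [hd_def, ← ZMod.coe_unitOfCoprime ℓ hcop, orderOf_units]
  -- q^r divides ℓ^d - 1
  have hpow : ((ℓ ^ d : ℕ) : ZMod (q ^ r)) = ((1 : ℕ) : ZMod (q ^ r)) := by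
    push_cast
    exact pow_orderOf_eq_one _
  have hdvd : q ^ r ∣ ℓ ^ d - 1 := by
    have := (ZMod.natCast_eq_natCast_iff _ _ _).mp hpow
    exact (Nat.modEq_iff_dvd' (Nat.one_le_pow _ _ hℓp.pos)).mp this.symm
  -- the Galois field
  let K := GaloisField ℓ d
  have hcard : Nat.card Kˣ = ℓ ^ d - 1 := by
    have h1 : Nat.card K = ℓ ^ d := GaloisField.card ℓ d hd.ne'
    rw [Nat.card_units, h1]
  obtain ⟨g, hg⟩ := IsCyclic.exists_ofOrder_eq_natCard (α := Kˣ)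
  set N := Nat.card Kˣ with hN
  have hN0 : N ≠ 0 := Nat.card_pos.ne'
  have hqrN : q ^ r ∣ N := hcard ▸ hdvd
  let ζ : Kˣ := g ^ (N / q ^ r)
  have hζ : orderOf ζ = q ^ r := by
    have hne0 : N / q ^ r ≠ 0 :=
      Nat.div_ne_zero_iff.mpr ⟨pow_ne_zero r hq.ne_zero, Nat.le_of_dvd (Nat.pos_of_ne_zero hN0) hqrN⟩
    rw [orderOf_pow' g hne0, hg, Nat.gcd_eq_right (Nat.div_dvd_of_dvd hqrN),
      Nat.div_div_self hqrN hN0]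
  -- move to matrices
  let F := ZMod ℓ
  have hfr : Module.finrank F K = d := GaloisField.finrank ℓ hd.ne'
  let b : Module.Basis (Fin d) F K := Module.finBasisOfFinrankEq F K hfr
  let φ₁ : Kˣ →* (Module.End F K)ˣ := Units.map (Algebra.lmul F K).toRingHom.toMonoidHom
  have hφ₁ : Function.Injective φ₁ := Units.map_injective (Algebra.lmul_injective)
  let φ₂ := Units.mapEquiv ((LinearMap.toMatrixAlgEquiv b).toRingEquiv.toMulEquiv)
  refine ⟨φ₂ (φ₁ ζ), ?_⟩
  have h2 := orderOf_injective φ₂.toMonoidHom φ₂.injective (φ₁ ζ)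
  rw [show φ₂ (φ₁ ζ) = φ₂.toMonoidHom (φ₁ ζ) from rfl, h2, orderOf_injective φ₁ hφ₁, hζ]
open Matrix Polynomial

lemma aux_fwd (ℓ q : ℕ) [Fact (Nat.Prime ℓ)] (hq : q.Prime) (hne : ℓ ≠ q)
    (r n : ℕ) (hr : 0 < r) (hn : 0 < n) (g : GL (Fin n) (ZMod ℓ))
    (hg : orderOf g = q ^ r) : orderOf (ℓ : ZMod (q ^ r)) ≤ n := by
  have hℓp : Nat.Prime ℓ := Fact.out
  haveI : Fact q.Prime := ⟨hq⟩
  haveI : NeZero (q ^ r) := ⟨pow_ne_zero r hq.ne_zero⟩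
  set F := ZMod ℓ
  set M : Matrix (Fin n) (Fin n) F := (g : Matrix (Fin n) (Fin n) F) with hM_def
  have hM1 : M ^ q ^ r = 1 := by
    have : g ^ q ^ r = 1 := hg ▸ pow_orderOf_eq_one g
    have := congrArg Units.val this
    rwa [Units.val_pow_eq_pow_val] at this
  have hM2 : M ^ q ^ (r - 1) ≠ 1 := by
    intro h
    have hg1 : g ^ q ^ (r - 1) = 1 := Units.ext (by rwa [Units.val_pow_eq_pow_val])
    have := orderOf_dvd_of_pow_eq_one hg1
    rw [hg] at this
    have hle := Nat.le_of_dvd (pow_pos hq.pos _) this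
    exact absurd hle (not_le.mpr (Nat.pow_lt_pow_right hq.one_lt (Nat.sub_lt hr one_pos)))
  have hint : IsIntegral F M := IsIntegral.of_finite F M
  set m := minpoly F M with hm_def
  have hm0 : m ≠ 0 := minpoly.ne_zero hint
  have hdvd : m ∣ (X ^ q ^ r - 1 : F[X]) := by
    apply minpoly.dvd
    simp [hM1]
  have hsep : (X ^ q ^ r - 1 : F[X]).Separable := by
    rw [X_pow_sub_one_separable_iff]
    rw [Ne, ZMod.natCast_eq_zero_iff]
    intro hdd
    rcases (Nat.Prime.dvd_of_dvd_pow hℓp hdd) with h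
    exact hne ((Nat.prime_dvd_prime_iff_eq hℓp hq).mp h)
  have hsf : Squarefree m := hsep.squarefree.squarefree_of_dvd hdvd
  set B : F[X] := X ^ q ^ (r - 1) - 1 with hB_def
  have hmB : ¬ m ∣ B := by
    intro h
    apply hM2
    have h0 : aeval M m = 0 := minpoly.aeval F M
    obtain ⟨c', hc'⟩ := h
    have h1 : aeval M B = 0 := by rw [hc', _root_.map_mul, h0, zero_mul]
    rw [hB_def, map_sub, map_pow, aeval_X, _root_.map_one, sub_eq_zero] at h1
    exact h1
  -- find an irreducible factor of m not dividing B
  set G : F[X] := gcd m B with hG_def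
  have hGm : G ∣ m := gcd_dvd_left m B
  have hG0 : G ≠ 0 := fun h => hm0 ((gcd_eq_zero_iff m B).mp h).1
  set c : F[X] := m / G with hc_def
  have heq : G * c = m := EuclideanDomain.mul_div_cancel' hG0 hGm
  have hc0 : c ≠ 0 := by
    intro h; rw [h, mul_zero] at heq; exact hm0 heq.symm
  have hcu : ¬ IsUnit c := by
    intro h
    obtain ⟨u, hu⟩ := h
    have hmG : m ∣ G := ⟨↑u⁻¹, by rw [← heq, ← hu, Units.mul_inv_cancel_right]⟩
    exact hmB (hmG.trans (gcd_dvd_right m B))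
  obtain ⟨p, hpirr, hpc⟩ := WfDvdMonoid.exists_irreducible_factor hcu hc0
  have hpm : p ∣ m := heq ▸ hpc.mul_left G
  have hpB : ¬ p ∣ B := by
    intro h
    have hpG : p ∣ G := dvd_gcd hpm h
    have : p * p ∣ m := heq ▸ mul_dvd_mul hpG hpc
    exact hpirr.not_isUnit (hsf p this)
  -- pass to the field E = F[X]/(p)
  haveI : Fact (Irreducible p) := ⟨hpirr⟩
  set E := AdjoinRoot p
  set x : E := AdjoinRoot.root p with hx_def
  have hx1 : x ^ q ^ r = 1 := by
    have : AdjoinRoot.mk p (X ^ q ^ r - 1) = 0 := AdjoinRoot.mk_eq_zero.mpr (hpm.trans hdvd)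
    rw [map_sub, map_pow, _root_.map_one, AdjoinRoot.mk_X, sub_eq_zero] at this
    exact this
  have hx2 : x ^ q ^ (r - 1) ≠ 1 := by
    intro h
    apply hpB
    rw [← AdjoinRoot.mk_eq_zero, map_sub, map_pow, _root_.map_one, AdjoinRoot.mk_X, sub_eq_zero]
    exact h
  -- x is a unit of order q^r
  have hq1 : 1 ≤ q ^ r := Nat.one_le_pow _ _ hq.pos
  let u : Eˣ := ⟨x, x ^ (q ^ r - 1),
    by rw [← pow_succ', Nat.sub_add_cancel hq1]; exact hx1,
    by rw [← pow_succ, Nat.sub_add_cancel hq1]; exact hx1⟩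
  have hu1 : u ^ q ^ r = 1 := by
    ext
    rw [Units.val_pow_eq_pow_val]
    exact hx1
  have hu2 : ¬ u ^ q ^ (r - 1) = 1 := by
    intro h
    apply hx2
    have := congrArg Units.val h
    rwa [Units.val_pow_eq_pow_val] at this
  have huord : orderOf u = q ^ r := by
    have hr' : r - 1 + 1 = r := Nat.sub_add_cancel hr
    rw [← hr']
    exact orderOf_eq_prime_pow hu2 (by rw [hr']; exact hu1)
  -- E is a finite field of size ℓ ^ deg p
  have hp0 : p ≠ 0 := hpirr.ne_zero
  let pb := AdjoinRoot.powerBasis hp0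
  haveI : Module.Finite F E := Module.Finite.of_basis pb.basis
  haveI : Finite E := Module.finite_of_finite F
  haveI : Fintype E := Fintype.ofFinite E
  set k := p.natDegree with hk_def
  have hfr : Module.finrank F E = k := by
    rw [PowerBasis.finrank pb]
    rfl
  have hcardE : Fintype.card E = ℓ ^ k := by
    rw [Module.card_eq_pow_finrank (K := F) (V := E), ZMod.card, hfr]
  have hcardEu : Fintype.card Eˣ = ℓ ^ k - 1 := by
    rw [Fintype.card_units, hcardE]
  have hdvd2 : q ^ r ∣ ℓ ^ k - 1 := by
    rw [← huord, ← hcardEu]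
    exact orderOf_dvd_card
  -- translate back to orderOf ℓ mod q^r
  have hmod : ((ℓ ^ k : ℕ) : ZMod (q ^ r)) = ((1 : ℕ) : ZMod (q ^ r)) := by
    rw [ZMod.natCast_eq_natCast_iff]
    exact ((Nat.modEq_iff_dvd' (Nat.one_le_pow _ _ hℓp.pos)).mpr hdvd2).symm
  have hdk : orderOf (ℓ : ZMod (q ^ r)) ∣ k := by
    apply orderOf_dvd_of_pow_eq_one
    have := hmod
    push_cast at this
    exact this
  have hk0 : 0 < k := hpirr.natDegree_pos
  have hkm : k ≤ m.natDegree := Polynomial.natDegree_le_of_dvd hpm hm0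
  have hmn : m.natDegree ≤ n := by
    have h1 : m ∣ M.charpoly := hm_def ▸ Matrix.minpoly_dvd_charpoly M
    have h2 := Polynomial.natDegree_le_of_dvd h1 (Matrix.charpoly_monic M).ne_zero
    rwa [Matrix.charpoly_natDegree_eq_dim, Fintype.card_fin] at h2
  exact le_trans (Nat.le_of_dvd hk0 hdk) (le_trans hkm hmn)

/-- For distinct primes `ℓ ≠ q` and positive integers `r, n`, `GL_n(𝔽_ℓ)` contains an
element of order `q^r` if and only if the multiplicative order of `ℓ` mod `q^r` is at most
`n`. -/
theorem gl_has_element_of_prime_power_order_iff (ℓ q : ℕ) [Fact (Nat.Prime ℓ)]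
    (hq : q.Prime) (hne : ℓ ≠ q) (r n : ℕ) (hr : 0 < r) (hn : 0 < n) :
    (∃ g : GL (Fin n) (ZMod ℓ), orderOf g = q ^ r) ↔
      orderOf (ℓ : ZMod (q ^ r)) ≤ n := by
  constructor
  · rintro ⟨g, hg⟩
    exact aux_fwd ℓ q hq hne r n hr hn g hg
  · intro hle
    obtain ⟨A, hA⟩ := aux_back ℓ q hq hne r n hr hle
    obtain ⟨B, hB⟩ := aux_embed hle A
    exact ⟨B, hB.trans hA⟩
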